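/- Let ξ = (ξ₁, ξ₂) ∈ ℝ² with ξ ≠ 0, M̄₁, λ > 0, and ψ₀ ∈ H¹₀(h₋,h₊) with g⟦ρ̄⟧ψ₀²(0) - λξ₁²M̄₁² ∫_{h₋}^{h₊}(ψ₀² + |ψ₀'|²/|ξ|²) dx₃ > 0. Define θ₀ := -ξ₂ψ₀'/|ξ|² and φ₀ := ξ₁⁻¹(gρ̄ψ₀/(P'(ρ̄)ρ̄) - ψ₀' - ξ₂θ₀) (assuming ξ₁ ≠ 0). Then the Fourier-reduced energy Ẽ(φ₀,θ₀,ψ₀) := g⟦ρ̄⟧ψ₀²(0) + ∫_{h₋}^{h₊}(gρ̄'ψ₀² + 2gρ̄ψ₀(ξ₁φ₀+ξ₂θ₀+ψ₀') - P'(ρ̄)ρ̄(ξ₁φ₀+ξ₂θ₀+ψ₀')² - λM̄₁²(ξ₁²(θ₀²+ψ₀²) + (ξ₂θ₀+ψ₀')²)) dx₃ equals g⟦ρ̄⟧ψ₀²(0) - λξ₁²M̄₁²∫_{h₋}^{h₊}(ψ₀² + |ψ₀'|²/|ξ|²) dx₃ > 0. -/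
import Mathlib


open MeasureTheory Real Set

/-- Horizontal-field instability: completing the square in the
Fourier-reduced energy. With `θ₀ = -ξ₂ψ₀'/|ξ|²` and
`φ₀ = ξ₁⁻¹(gρ̄ψ₀/(P'(ρ̄)ρ̄) - ψ₀' - ξ₂θ₀)`, the reduced energy
`Ẽ(φ₀,θ₀,ψ₀)` equals `g⟦ρ̄⟧ψ₀(0)² - λξ₁²M̄₁²∫(ψ₀² + |ψ₀'|²/|ξ|²)`, which is
positive by hypothesis. -/
theorem horizontal_field_instability
    (hm hp g lam M₁ jmp ξ₁ ξ₂ : ℝ)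
    (hhm : hm < 0) (hhp : 0 < hp) (hg : 0 < g) (hlam : 0 < lam) (hM₁ : 0 < M₁)
    (hjmp : 0 < jmp) (hξ₁ : ξ₁ ≠ 0)
    (ρ ρ' a : ℝ → ℝ) (ha : ∀ t, 0 < a t)
    (hrel : ∀ t, a t * ρ' t = -(g * (ρ t) ^ 2))
    (ψ₀ : ℝ → ℝ) (hψ₀ : ContDiff ℝ 1 ψ₀) (hbm : ψ₀ hm = 0) (hbp : ψ₀ hp = 0)
    (hpos : 0 < g * jmp * (ψ₀ 0) ^ 2
      - lam * ξ₁ ^ 2 * M₁ ^ 2 *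
        ∫ t in Ioo hm hp, ((ψ₀ t) ^ 2 + (deriv ψ₀ t) ^ 2 / (ξ₁ ^ 2 + ξ₂ ^ 2)))
    (θ₀ φ₀ : ℝ → ℝ)
    (hθ₀ : ∀ t, θ₀ t = -ξ₂ * deriv ψ₀ t / (ξ₁ ^ 2 + ξ₂ ^ 2))
    (hφ₀ : ∀ t, φ₀ t = ξ₁⁻¹ * (g * ρ t * ψ₀ t / a t - deriv ψ₀ t - ξ₂ * θ₀ t)) :
    (g * jmp * (ψ₀ 0) ^ 2
        + ∫ t in Ioo hm hp,
            (g * ρ' t * (ψ₀ t) ^ 2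
              + 2 * g * ρ t * ψ₀ t * (ξ₁ * φ₀ t + ξ₂ * θ₀ t + deriv ψ₀ t)
              - a t * (ξ₁ * φ₀ t + ξ₂ * θ₀ t + deriv ψ₀ t) ^ 2
              - lam * M₁ ^ 2 * (ξ₁ ^ 2 * ((θ₀ t) ^ 2 + (ψ₀ t) ^ 2)
                  + (ξ₂ * θ₀ t + deriv ψ₀ t) ^ 2)))
      = g * jmp * (ψ₀ 0) ^ 2
        - lam * ξ₁ ^ 2 * M₁ ^ 2 *
            (∫ t in Ioo hm hp, ((ψ₀ t) ^ 2 + (deriv ψ₀ t) ^ 2 / (ξ₁ ^ 2 + ξ₂ ^ 2))) ∧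
    0 < g * jmp * (ψ₀ 0) ^ 2
        + ∫ t in Ioo hm hp,
            (g * ρ' t * (ψ₀ t) ^ 2
              + 2 * g * ρ t * ψ₀ t * (ξ₁ * φ₀ t + ξ₂ * θ₀ t + deriv ψ₀ t)
              - a t * (ξ₁ * φ₀ t + ξ₂ * θ₀ t + deriv ψ₀ t) ^ 2
              - lam * M₁ ^ 2 * (ξ₁ ^ 2 * ((θ₀ t) ^ 2 + (ψ₀ t) ^ 2)
                  + (ξ₂ * θ₀ t + deriv ψ₀ t) ^ 2)) := by
  have hξ : ξ₁ ^ 2 + ξ₂ ^ 2 ≠ 0 := by positivity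
  have hint : ∀ t,
      (g * ρ' t * (ψ₀ t) ^ 2
        + 2 * g * ρ t * ψ₀ t * (ξ₁ * φ₀ t + ξ₂ * θ₀ t + deriv ψ₀ t)
        - a t * (ξ₁ * φ₀ t + ξ₂ * θ₀ t + deriv ψ₀ t) ^ 2
        - lam * M₁ ^ 2 * (ξ₁ ^ 2 * ((θ₀ t) ^ 2 + (ψ₀ t) ^ 2)
            + (ξ₂ * θ₀ t + deriv ψ₀ t) ^ 2))
      = -(lam * ξ₁ ^ 2 * M₁ ^ 2) *
          ((ψ₀ t) ^ 2 + (deriv ψ₀ t) ^ 2 / (ξ₁ ^ 2 + ξ₂ ^ 2)) := by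
    intro t
    have ha' := (ha t).ne'
    have hρ' : ρ' t = -(g * (ρ t) ^ 2) / a t := by
      field_simp [ha']
      linarith [hrel t]
    simp only [hφ₀, hθ₀, hρ']
    field_simp
    ring
  have hI : (∫ t in Ioo hm hp,
      (g * ρ' t * (ψ₀ t) ^ 2
        + 2 * g * ρ t * ψ₀ t * (ξ₁ * φ₀ t + ξ₂ * θ₀ t + deriv ψ₀ t)
        - a t * (ξ₁ * φ₀ t + ξ₂ * θ₀ t + deriv ψ₀ t) ^ 2
        - lam * M₁ ^ 2 * (ξ₁ ^ 2 * ((θ₀ t) ^ 2 + (ψ₀ t) ^ 2)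
            + (ξ₂ * θ₀ t + deriv ψ₀ t) ^ 2)))
      = -(lam * ξ₁ ^ 2 * M₁ ^ 2) *
          ∫ t in Ioo hm hp, ((ψ₀ t) ^ 2 + (deriv ψ₀ t) ^ 2 / (ξ₁ ^ 2 + ξ₂ ^ 2)) := by
    rw [← integral_const_mul]
    exact integral_congr_ae (Filter.Eventually.of_forall fun t => hint t)
  constructor
  · rw [hI]; ring
  · rw [hI]; linarith
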